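/- Let R = √p · (1/δ)^{1/p} with p ≥ 2 and δ ∈ (0,1) satisfying R²δ ≤ 1, and let z = ε(1 + Rη) with ε Rademacher and η independent Bernoulli(δ). Then there exist absolute constants c, C > 0 such that c√p ≤ ‖z‖_{L_p}/‖z‖_{L_2} ≤ C√p. -/

import Mathlib

set_option maxHeartbeats 1000000

/-- With `R = √p (1/δ)^{1/p}` and `R²δ ≤ 1`, the ratio `‖z‖_{L_p}/‖z‖_{L_2}`
(computed from `E|z|^q = 1 + ((1+R)^q − 1)δ` for `z = ε(1+Rη)`) is two-sided
comparable to `√p`, with absolute constants. -/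
theorem stmt8 : ∃ c C : ℝ, 0 < c ∧ 0 < C ∧
    ∀ R δ p : ℝ, 2 ≤ p → 0 < δ → δ < 1 →
      R = Real.sqrt p * (1 / δ) ^ (1 / p) →
      R ^ (2 : ℝ) * δ ≤ 1 →
      c * Real.sqrt p ≤
          (1 + ((1 + R) ^ p - 1) * δ) ^ (1 / p) /
            (1 + ((1 + R) ^ (2 : ℝ) - 1) * δ) ^ ((1 : ℝ) / 2) ∧
        (1 + ((1 + R) ^ p - 1) * δ) ^ (1 / p) /
            (1 + ((1 + R) ^ (2 : ℝ) - 1) * δ) ^ ((1 : ℝ) / 2) ≤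
          C * Real.sqrt p := by
  refine ⟨1/2, 4, by norm_num, by norm_num, ?_⟩
  intro R δ p hp hδ0 hδ1 hR hR2
  have hp0 : (0:ℝ) < p := by linarith
  have hp0' : (0:ℝ) ≤ p := hp0.le
  have hpne : p ≠ 0 := ne_of_gt hp0
  have hp1 : (1:ℝ) ≤ p := by linarith
  have hsq1 : (1:ℝ) ≤ Real.sqrt p := by
    rw [show (1:ℝ) = Real.sqrt 1 by simp]
    exact Real.sqrt_le_sqrt hp1
  have hδinv : (1:ℝ) ≤ 1/δ := by rw [le_div_iff₀ hδ0]; linarith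
  have hd1 : (1:ℝ) ≤ (1/δ) ^ (1/p) := by
    have := Real.rpow_le_rpow (by norm_num) hδinv (by positivity : (0:ℝ) ≤ 1/p)
    simpa using this
  have hR1 : (1:ℝ) ≤ R := by
    rw [hR]
    nlinarith [hsq1, hd1]
  have hR0 : (0:ℝ) < R := by linarith
  -- R^p * δ = p^(p/2)
  have hsqp : Real.sqrt p ^ p = p ^ (p/2 : ℝ) := by
    rw [Real.sqrt_eq_rpow, ← Real.rpow_mul hp0']
    ring_nf
  have hdp : ((1/δ) ^ (1/p : ℝ)) ^ p = 1/δ := by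
    rw [← Real.rpow_mul (by positivity), one_div_mul_cancel hpne, Real.rpow_one]
  have hRp : R ^ p = p ^ (p/2 : ℝ) * (1/δ) := by
    rw [hR, Real.mul_rpow (Real.sqrt_nonneg p) (by positivity), hsqp, hdp]
  have hRpδ : R ^ p * δ = p ^ (p/2 : ℝ) := by
    rw [hRp]; field_simp
  have hppow1 : (1:ℝ) ≤ p ^ (p/2 : ℝ) := by
    have := Real.rpow_le_rpow (by norm_num) hp1 (by positivity : (0:ℝ) ≤ p/2)
    simpa using this
  have h2p : (2:ℝ) ≤ (2:ℝ) ^ p := by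
    have := Real.rpow_le_rpow_of_exponent_le (by norm_num : (1:ℝ) ≤ 2) hp1
    simpa using this
  have h2p1 : (1:ℝ) ≤ (2:ℝ) ^ p := by linarith
  -- numerator bounds
  set x : ℝ := 1 + ((1 + R) ^ p - 1) * δ with hx
  have hxlow : p ^ (p/2 : ℝ) ≤ x := by
    have h1 : R ^ p ≤ (1 + R) ^ p :=
      Real.rpow_le_rpow hR0.le (by linarith) hp0'
    nlinarith [hRpδ]
  have hxhigh : x ≤ (4 * Real.sqrt p) ^ p := by
    have h1 : (1 + R) ^ p ≤ (2 * R) ^ p :=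
      Real.rpow_le_rpow (by linarith) (by linarith) hp0'
    have h2 : (2 * R) ^ p = 2 ^ p * R ^ p := Real.mul_rpow (by norm_num) hR0.le
    have h3 : (4 * Real.sqrt p) ^ p = 2 ^ p * (2 ^ p * p ^ (p/2 : ℝ)) := by
      rw [show (4:ℝ) * Real.sqrt p = 2 * (2 * Real.sqrt p) by ring,
        Real.mul_rpow (by norm_num) (by positivity),
        Real.mul_rpow (by norm_num) (Real.sqrt_nonneg p), hsqp]
      try ring
    rw [h3]
    have h4 : x ≤ 1 + 2 ^ p * p ^ (p/2 : ℝ) := by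
      nlinarith [hRpδ, h1, h2]
    nlinarith [mul_le_mul h2p (le_refl ((2:ℝ)^p * p ^ (p/2:ℝ))) (by positivity) (by positivity), hppow1, h2p1]
  have hx0 : (0:ℝ) < x := by
    have := hppow1; linarith [hxlow]
  have hNlow : Real.sqrt p ≤ x ^ (1/p : ℝ) := by
    have h1 : (p ^ (p/2 : ℝ)) ^ (1/p : ℝ) ≤ x ^ (1/p : ℝ) :=
      Real.rpow_le_rpow (by positivity) hxlow (by positivity)
    have h2 : (p ^ (p/2 : ℝ)) ^ (1/p : ℝ) = Real.sqrt p := by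
      rw [← Real.rpow_mul hp0', Real.sqrt_eq_rpow]
      congr 1
      field_simp
    linarith [h1, h2.symm.le, h2.le]
  have hNhigh : x ^ (1/p : ℝ) ≤ 4 * Real.sqrt p := by
    have h1 : x ^ (1/p : ℝ) ≤ ((4 * Real.sqrt p) ^ p) ^ (1/p : ℝ) :=
      Real.rpow_le_rpow hx0.le hxhigh (by positivity)
    have h2 : ((4 * Real.sqrt p) ^ p) ^ (1/p : ℝ) = 4 * Real.sqrt p := by
      rw [← Real.rpow_mul (by positivity), mul_one_div_cancel hpne, Real.rpow_one]
    rw [h2] at h1; exact h1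
  -- denominator bounds
  have hsq2 : (1 + R) ^ (2:ℝ) = (1 + R) * (1 + R) := by
    rw [show (2:ℝ) = ((2:ℕ):ℝ) by norm_num, Real.rpow_natCast]
    ring
  have hR2' : R * R * δ ≤ 1 := by
    rw [show (2:ℝ) = ((2:ℕ):ℝ) by norm_num, Real.rpow_natCast] at hR2
    nlinarith [hR2]
  set y : ℝ := 1 + ((1 + R) ^ (2:ℝ) - 1) * δ with hy
  have hylow : (1:ℝ) ≤ y := by
    rw [hy, hsq2]; nlinarith
  have hyhigh : y ≤ 4 := by
    rw [hy, hsq2]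
    have hRR : R ≤ R * R := by nlinarith
    have hRδ : R * δ ≤ 1 :=
      le_trans (mul_le_mul_of_nonneg_right hRR hδ0.le) hR2'
    have hexp : ((1 + R) * (1 + R) - 1) * δ = 2 * (R * δ) + R * R * δ := by ring
    rw [hexp]
    linarith only [hRδ, hR2']
  have hy0 : (0:ℝ) < y := by linarith
  have hDlow : (1:ℝ) ≤ y ^ ((1:ℝ)/2) := by
    rw [← Real.sqrt_eq_rpow]
    rw [show (1:ℝ) = Real.sqrt 1 by simp]
    exact Real.sqrt_le_sqrt hylow
  have hDhigh : y ^ ((1:ℝ)/2) ≤ 2 := by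
    rw [← Real.sqrt_eq_rpow]
    have : Real.sqrt y ≤ Real.sqrt 4 := Real.sqrt_le_sqrt hyhigh
    have h4 : Real.sqrt 4 = 2 := by
      rw [show (4:ℝ) = 2^2 by norm_num, Real.sqrt_sq (by norm_num : (0:ℝ) ≤ 2)]
    linarith
  have hD0 : (0:ℝ) < y ^ ((1:ℝ)/2) := by linarith
  constructor
  · have : Real.sqrt p / 2 ≤ x ^ (1/p : ℝ) / y ^ ((1:ℝ)/2) :=
      div_le_div₀ (by positivity) hNlow hD0 hDhigh
    linarith [this]
  · have : x ^ (1/p : ℝ) / y ^ ((1:ℝ)/2) ≤ (4 * Real.sqrt p) / 1 :=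
      div_le_div₀ (by positivity) hNhigh (by norm_num) hDlow
    simpa using this
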